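/- Let u, p, q : ℝ × ℝ → ℝ be continuous nonnegative on [0,∞)², and let k : [0,∞)⁴ → ℝ be C² in its first two variables with k and its partial derivatives k_{t₁}, k_{t₂}, k_{t₁t₂} nonnegative. Suppose u(t₁,t₂) ≤ p(t₁,t₂) + q(t₁,t₂)·∫₀^{t₁}∫₀^{t₂} k(t₁,t₂,s₁,s₂) u(s₁,s₂) ds₂ ds₁ for all t₁,t₂ ≥ 0. Define a(t₁,t₂) = k(t₁,t₂,t₁,t₂)p(t₁,t₂) + ∫₀^{t₂} k_{t₂}(t₁,t₂,t₁,s₂)p(t₁,s₂) ds₂ + ∫₀^{t₁} k_{t₁}(t₁,t₂,s₁,t₂)p(s₁,t₂) ds₁ + ∫₀^{t₁}∫₀^{t₂} k_{t₁t₂}(t₁,t₂,s₁,s₂)p(s₁,s₂) ds₂ ds₁, define b analogously with q in place of p, A(t₁,t₂) = ∫₀^{t₁}∫₀^{t₂} a(s₁,s₂) ds₂ ds₁, and c(t₁,t₂) = ∫₀^{t₂} b(t₁,s₂) ds₂. Then u(t₁,t₂) ≤ p(t₁,t₂) + q(t₁,t₂)·A(t₁,t₂)·exp(∫₀^{t₁}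 c(s₁,t₂) ds₁) for all t₁,t₂ ≥ 0. -/

import Mathlib

open intervalIntegral Set MeasureTheory
set_option maxHeartbeats 1000000


noncomputable def pachV (K : ℝ → ℝ → ℝ → ℝ → ℝ) (U : ℝ → ℝ → ℝ) (x y : ℝ) : ℝ :=
  ∫ s₁ in (0:ℝ)..x, ∫ s₂ in (0:ℝ)..y, K x y s₁ s₂ * U s₁ s₂

noncomputable def pachE (K K₁ K₂ K₁₂ : ℝ → ℝ → ℝ → ℝ → ℝ) (U : ℝ → ℝ → ℝ) (r w : ℝ) : ℝ :=
  K r w r w * U r w + (∫ s in (0:ℝ)..w, K₂ r w r s * U r s)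
    + (∫ s in (0:ℝ)..r, K₁ r w s w * U s w)
    + pachV K₁₂ U r w

lemma cont4 {K : ℝ → ℝ → ℝ → ℝ → ℝ}
    (hK : Continuous fun z : ℝ × ℝ × ℝ × ℝ => K z.1 z.2.1 z.2.2.1 z.2.2.2)
    {X : Type*} [TopologicalSpace X] {f g h i : X → ℝ}
    (hf : Continuous f) (hg : Continuous g) (hh : Continuous h) (hi : Continuous i) :
    Continuous fun x => K (f x) (g x) (h x) (i x) :=
  hK.comp (hf.prodMk (hg.prodMk (hh.prodMk hi)))

lemma cont2 {U : ℝ → ℝ → ℝ} (hU : Continuous fun z : ℝ × ℝ => U z.1 z.2)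
    {X : Type*} [TopologicalSpace X] {f g : X → ℝ}
    (hf : Continuous f) (hg : Continuous g) : Continuous fun x => U (f x) (g x) :=
  hU.comp (hf.prodMk hg)

lemma contV {K : ℝ → ℝ → ℝ → ℝ → ℝ} {U : ℝ → ℝ → ℝ}
    (hK : Continuous fun z : ℝ × ℝ × ℝ × ℝ => K z.1 z.2.1 z.2.2.1 z.2.2.2)
    (hU : Continuous fun z : ℝ × ℝ => U z.1 z.2) :
    Continuous fun z : ℝ × ℝ => pachV K U z.1 z.2 := by
  have inner : Continuous fun w : (ℝ × ℝ) × ℝ =>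
      ∫ s₂ in (0:ℝ)..w.1.2, K w.1.1 w.1.2 w.2 s₂ * U w.2 s₂ := by
    apply continuous_parametric_intervalIntegral_of_continuous
      (f := fun (w : (ℝ × ℝ) × ℝ) (s₂ : ℝ) => K w.1.1 w.1.2 w.2 s₂ * U w.2 s₂)
    · exact (cont4 hK (by fun_prop) (by fun_prop) (by fun_prop) (by fun_prop)).mul
        (cont2 hU (by fun_prop) (by fun_prop))
    · fun_prop
  exact continuous_parametric_intervalIntegral_of_continuous
    (f := fun (z : ℝ × ℝ) (s₁ : ℝ) => ∫ s₂ in (0:ℝ)..z.2, K z.1 z.2 s₁ s₂ * U s₁ s₂)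
    inner continuous_fst

lemma contE {K K₁ K₂ K₁₂ : ℝ → ℝ → ℝ → ℝ → ℝ} {U : ℝ → ℝ → ℝ}
    (hK : Continuous fun z : ℝ × ℝ × ℝ × ℝ => K z.1 z.2.1 z.2.2.1 z.2.2.2)
    (hK₁ : Continuous fun z : ℝ × ℝ × ℝ × ℝ => K₁ z.1 z.2.1 z.2.2.1 z.2.2.2)
    (hK₂ : Continuous fun z : ℝ × ℝ × ℝ × ℝ => K₂ z.1 z.2.1 z.2.2.1 z.2.2.2)
    (hK₁₂ : Continuous fun z : ℝ × ℝ × ℝ × ℝ => K₁₂ z.1 z.2.1 z.2.2.1 z.2.2.2)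
    (hU : Continuous fun z : ℝ × ℝ => U z.1 z.2) :
    Continuous fun z : ℝ × ℝ => pachE K K₁ K₂ K₁₂ U z.1 z.2 := by
  unfold pachE
  refine ((((cont4 hK continuous_fst continuous_snd continuous_fst continuous_snd).mul
      (cont2 hU continuous_fst continuous_snd)).add ?_).add ?_).add
      ((contV hK₁₂ hU) : Continuous fun z : ℝ × ℝ => pachV K₁₂ U z.1 z.2)
  · exact continuous_parametric_intervalIntegral_of_continuous
      (f := fun (z : ℝ × ℝ) (s : ℝ) => K₂ z.1 z.2 z.1 s * U z.1 s)
      ((cont4 hK₂ (by fun_prop) (by fun_prop) (by fun_prop) (by fun_prop)).mul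
        (cont2 hU (by fun_prop) (by fun_prop))) continuous_snd
  · exact continuous_parametric_intervalIntegral_of_continuous
      (f := fun (z : ℝ × ℝ) (s : ℝ) => K₁ z.1 z.2 s z.2 * U s z.2)
      ((cont4 hK₁ (by fun_prop) (by fun_prop) (by fun_prop) (by fun_prop)).mul
        (cont2 hU (by fun_prop) (by fun_prop))) continuous_fst

lemma swap_rect {f : ℝ → ℝ → ℝ} {a b c d : ℝ} (hab : a ≤ b) (hcd : c ≤ d)
    (hf : IntegrableOn (Function.uncurry f) (Ioc a b ×ˢ Ioc c d)
      (volume.prod volume)) :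
    (∫ x in a..b, ∫ y in c..d, f x y) = ∫ y in c..d, ∫ x in a..b, f x y := by
  rw [integral_of_le hab, integral_of_le hcd]
  simp_rw [integral_of_le hcd, integral_of_le hab]
  exact MeasureTheory.integral_integral_swap
    (by rwa [IntegrableOn, ← Measure.prod_restrict] at hf)

lemma swap_rect' {f : ℝ → ℝ → ℝ} (hf : Continuous (Function.uncurry f))
    {a b c d : ℝ} (hab : a ≤ b) (hcd : c ≤ d) :
    (∫ x in a..b, ∫ y in c..d, f x y) = ∫ y in c..d, ∫ x in a..b, f x y := by
  apply swap_rect hab hcd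
  have hcc : IntegrableOn (Function.uncurry f) (Icc a b ×ˢ Icc c d)
      (volume.prod volume) :=
    ContinuousOn.integrableOn_compact (isCompact_Icc.prod isCompact_Icc) hf.continuousOn
  exact hcc.mono_set (prod_mono Ioc_subset_Icc_self Ioc_subset_Icc_self)

lemma ii_indicator {g : ℝ → ℝ} (hg : Continuous g) {S : Set ℝ} (hS : MeasurableSet S)
    (a b : ℝ) : IntervalIntegrable (S.indicator g) volume a b := by
  rw [intervalIntegrable_iff]
  exact ((hg.intervalIntegrable a b).def').indicator hS

lemma swap_tri {f : ℝ → ℝ → ℝ} (hf : Continuous (Function.uncurry f))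
    {y : ℝ} (hy : 0 ≤ y) :
    (∫ w in (0:ℝ)..y, ∫ s in (0:ℝ)..w, f w s) = ∫ s in (0:ℝ)..y, ∫ w in s..y, f w s := by
  set F : ℝ → ℝ → ℝ := fun w s => if s ≤ w then f w s else 0 with hF
  have hFu : Function.uncurry F =
      Set.indicator {p : ℝ × ℝ | p.2 ≤ p.1} (Function.uncurry f) := by
    ext p
    simp only [Function.uncurry, hF, Set.indicator, mem_setOf_eq]
  have hFint : IntegrableOn (Function.uncurry F) (Ioc 0 y ×ˢ Ioc 0 y)
      (volume.prod volume) := by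
    rw [hFu]
    apply MeasureTheory.Integrable.indicator
    · have hcc : IntegrableOn (Function.uncurry f) (Icc 0 y ×ˢ Icc 0 y)
          (volume.prod volume) :=
        ContinuousOn.integrableOn_compact (isCompact_Icc.prod isCompact_Icc) hf.continuousOn
      exact hcc.mono_set (prod_mono Ioc_subset_Icc_self Ioc_subset_Icc_self)
    · exact (isClosed_le continuous_snd continuous_fst).measurableSet
  have hFiw : ∀ w a b : ℝ, IntervalIntegrable (F w) volume a b := by
    intro w a b
    have : F w = Set.indicator (Iic w) (f w) := by
      ext s; by_cases h : s ≤ w <;> simp [hF, Set.indicator, h]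
    rw [this]
    exact ii_indicator (hf.comp (Continuous.prodMk_right w)) measurableSet_Iic a b
  have hFis : ∀ s a b : ℝ, IntervalIntegrable (fun w => F w s) volume a b := by
    intro s a b
    have : (fun w => F w s) = Set.indicator (Ici s) (fun w => f w s) := by
      ext w; by_cases h : s ≤ w <;> simp [hF, Set.indicator, h]
    rw [this]
    exact ii_indicator (hf.comp (continuous_id.prodMk continuous_const)) measurableSet_Ici a b
  have step1 : (∫ w in (0:ℝ)..y, ∫ s in (0:ℝ)..w, f w s)
      = ∫ w in (0:ℝ)..y, ∫ s in (0:ℝ)..y, F w s := by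
    apply intervalIntegral.integral_congr
    intro w hw
    rw [uIcc_of_le hy] at hw
    have hw0 : (0:ℝ) ≤ w := hw.1
    have hwy : w ≤ y := hw.2
    show (∫ s in (0:ℝ)..w, f w s) = ∫ s in (0:ℝ)..y, F w s
    rw [← intervalIntegral.integral_add_adjacent_intervals (hFiw w 0 w) (hFiw w w y)]
    have h1 : (∫ s in (0:ℝ)..w, F w s) = ∫ s in (0:ℝ)..w, f w s := by
      apply intervalIntegral.integral_congr
      intro s hs
      rw [uIcc_of_le hw0] at hs
      simp [hF, hs.2]
    have h2 : (∫ s in w..y, F w s) = 0 := by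
      rw [integral_of_le hwy, integral_Ioc_eq_integral_Ioo]
      apply setIntegral_eq_zero_of_forall_eq_zero
      intro s hs
      simp [hF, not_le.2 hs.1]
    rw [h1, h2, add_zero]
  have step2 : (∫ s in (0:ℝ)..y, ∫ w in (0:ℝ)..y, F w s)
      = ∫ s in (0:ℝ)..y, ∫ w in s..y, f w s := by
    apply intervalIntegral.integral_congr
    intro s hs
    rw [uIcc_of_le hy] at hs
    have hs0 : (0:ℝ) ≤ s := hs.1
    have hsy : s ≤ y := hs.2
    show (∫ w in (0:ℝ)..y, F w s) = ∫ w in s..y, f w s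
    rw [← intervalIntegral.integral_add_adjacent_intervals (hFis s 0 s) (hFis s s y)]
    have h1 : (∫ w in (0:ℝ)..s, F w s) = 0 := by
      rw [integral_of_le hs0, integral_Ioc_eq_integral_Ioo]
      apply setIntegral_eq_zero_of_forall_eq_zero
      intro w hw
      simp [hF, not_le.2 hw.2]
    have h2 : (∫ w in s..y, F w s) = ∫ w in s..y, f w s := by
      apply intervalIntegral.integral_congr
      intro w hw
      rw [uIcc_of_le hsy] at hw
      simp [hF, hw.1]
    rw [h1, h2, zero_add]
  rw [step1, swap_rect hy hy hFint, step2]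


section
variable {K K₁ K₂ K₁₂ : ℝ → ℝ → ℝ → ℝ → ℝ} {U : ℝ → ℝ → ℝ}

lemma nonnegV (hKc : Continuous fun z : ℝ × ℝ × ℝ × ℝ => K z.1 z.2.1 z.2.2.1 z.2.2.2)
    (hUc : Continuous fun z : ℝ × ℝ => U z.1 z.2)
    (hK0 : ∀ x y s₁ s₂, 0 ≤ K x y s₁ s₂) (hU0 : ∀ x y, 0 ≤ U x y)
    {x y : ℝ} (hx : 0 ≤ x) (hy : 0 ≤ y) : 0 ≤ pachV K U x y := by
  apply intervalIntegral.integral_nonneg hx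
  intro s₁ _
  apply intervalIntegral.integral_nonneg hy
  intro s₂ _
  exact mul_nonneg (hK0 _ _ _ _) (hU0 _ _)

lemma monoV (hKc : Continuous fun z : ℝ × ℝ × ℝ × ℝ => K z.1 z.2.1 z.2.2.1 z.2.2.2)
    (hUc : Continuous fun z : ℝ × ℝ => U z.1 z.2)
    (hK0 : ∀ x y s₁ s₂, 0 ≤ K x y s₁ s₂) (hU0 : ∀ x y, 0 ≤ U x y)
    (hKm : ∀ x x' y y' s₁ s₂ : ℝ, 0 ≤ x → x ≤ x' → 0 ≤ y → y ≤ y' →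
      0 ≤ s₁ → 0 ≤ s₂ → K x y s₁ s₂ ≤ K x' y' s₁ s₂)
    {x x' y y' : ℝ} (hx : 0 ≤ x) (hxx : x ≤ x') (hy : 0 ≤ y) (hyy : y ≤ y') :
    pachV K U x y ≤ pachV K U x' y' := by
  have cIn : ∀ a b : ℝ, Continuous fun s₁ : ℝ => ∫ s₂ in (0:ℝ)..b, K a b s₁ s₂ * U s₁ s₂ := by
    intro a b
    exact continuous_parametric_intervalIntegral_of_continuous'
      (f := fun (s₁ : ℝ) (s₂ : ℝ) => K a b s₁ s₂ * U s₁ s₂)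
      ((cont4 hKc (by fun_prop) (by fun_prop) (by fun_prop) (by fun_prop)).mul
        (cont2 hUc (by fun_prop) (by fun_prop))) 0 b
  have cIn2 : Continuous fun s₁ : ℝ => ∫ s₂ in (0:ℝ)..y', K x' y' s₁ s₂ * U s₁ s₂ := cIn x' y'
  have step1 : pachV K U x y ≤ ∫ s₁ in (0:ℝ)..x, ∫ s₂ in (0:ℝ)..y', K x' y' s₁ s₂ * U s₁ s₂ := by
    apply intervalIntegral.integral_mono_on hx ((cIn x y).intervalIntegrable 0 x)
      (cIn2.intervalIntegrable 0 x)
    intro s₁ hs₁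
    have inner1 : (∫ s₂ in (0:ℝ)..y, K x y s₁ s₂ * U s₁ s₂)
        ≤ ∫ s₂ in (0:ℝ)..y, K x' y' s₁ s₂ * U s₁ s₂ := by
      apply intervalIntegral.integral_mono_on hy
        (((cont4 hKc (by fun_prop) (by fun_prop) (by fun_prop) (by fun_prop)).mul
          (cont2 hUc (by fun_prop) (by fun_prop))).intervalIntegrable 0 y)
        (((cont4 hKc (by fun_prop) (by fun_prop) (by fun_prop) (by fun_prop)).mul
          (cont2 hUc (by fun_prop) (by fun_prop))).intervalIntegrable 0 y)
      intro s₂ hs₂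
      exact mul_le_mul_of_nonneg_right (hKm x x' y y' s₁ s₂ hx hxx hy hyy hs₁.1 hs₂.1) (hU0 _ _)
    have inner2 : (∫ s₂ in (0:ℝ)..y, K x' y' s₁ s₂ * U s₁ s₂)
        ≤ ∫ s₂ in (0:ℝ)..y', K x' y' s₁ s₂ * U s₁ s₂ := by
      apply intervalIntegral.integral_mono_interval le_rfl hy hyy
      · filter_upwards with s₂ using mul_nonneg (hK0 _ _ _ _) (hU0 _ _)
      · exact ((cont4 hKc (by fun_prop) (by fun_prop) (by fun_prop) (by fun_prop)).mul
          (cont2 hUc (by fun_prop) (by fun_prop))).intervalIntegrable 0 y'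
    exact inner1.trans inner2
  have step2 : (∫ s₁ in (0:ℝ)..x, ∫ s₂ in (0:ℝ)..y', K x' y' s₁ s₂ * U s₁ s₂)
      ≤ pachV K U x' y' := by
    apply intervalIntegral.integral_mono_interval le_rfl hx hxx
    · filter_upwards with s₁
      apply intervalIntegral.integral_nonneg (hy.trans hyy)
      intro s₂ _
      exact mul_nonneg (hK0 _ _ _ _) (hU0 _ _)
    · exact cIn2.intervalIntegrable 0 x'
  exact step1.trans step2

lemma nonnegE (hKc : Continuous fun z : ℝ × ℝ × ℝ × ℝ => K z.1 z.2.1 z.2.2.1 z.2.2.2)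
    (hK0 : ∀ x y s₁ s₂, 0 ≤ K x y s₁ s₂) (hK₁0 : ∀ x y s₁ s₂, 0 ≤ K₁ x y s₁ s₂)
    (hK₂0 : ∀ x y s₁ s₂, 0 ≤ K₂ x y s₁ s₂) (hK₁₂0 : ∀ x y s₁ s₂, 0 ≤ K₁₂ x y s₁ s₂)
    (hU0 : ∀ x y, 0 ≤ U x y)
    {r w : ℝ} (hr : 0 ≤ r) (hw : 0 ≤ w) : 0 ≤ pachE K K₁ K₂ K₁₂ U r w := by
  unfold pachE
  have h1 : 0 ≤ K r w r w * U r w := mul_nonneg (hK0 _ _ _ _) (hU0 _ _)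
  have h2 : 0 ≤ ∫ s in (0:ℝ)..w, K₂ r w r s * U r s :=
    intervalIntegral.integral_nonneg hw fun s _ => mul_nonneg (hK₂0 _ _ _ _) (hU0 _ _)
  have h3 : 0 ≤ ∫ s in (0:ℝ)..r, K₁ r w s w * U s w :=
    intervalIntegral.integral_nonneg hr fun s _ => mul_nonneg (hK₁0 _ _ _ _) (hU0 _ _)
  have h4 : 0 ≤ pachV K₁₂ U r w := by
    apply intervalIntegral.integral_nonneg hr
    intro s₁ _
    exact intervalIntegral.integral_nonneg hw fun s₂ _ => mul_nonneg (hK₁₂0 _ _ _ _) (hU0 _ _)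
  linarith
end


lemma boundE {K K₁ K₂ K₁₂ : ℝ → ℝ → ℝ → ℝ → ℝ} {U P Q : ℝ → ℝ → ℝ}
    (hKc : Continuous fun z : ℝ × ℝ × ℝ × ℝ => K z.1 z.2.1 z.2.2.1 z.2.2.2)
    (hK₁c : Continuous fun z : ℝ × ℝ × ℝ × ℝ => K₁ z.1 z.2.1 z.2.2.1 z.2.2.2)
    (hK₂c : Continuous fun z : ℝ × ℝ × ℝ × ℝ => K₂ z.1 z.2.1 z.2.2.1 z.2.2.2)
    (hK₁₂c : Continuous fun z : ℝ × ℝ × ℝ × ℝ => K₁₂ z.1 z.2.1 z.2.2.1 z.2.2.2)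
    (hUc : Continuous fun z : ℝ × ℝ => U z.1 z.2)
    (hPc : Continuous fun z : ℝ × ℝ => P z.1 z.2)
    (hQc : Continuous fun z : ℝ × ℝ => Q z.1 z.2)
    (hK0 : ∀ x y s₁ s₂, 0 ≤ K x y s₁ s₂) (hK₁0 : ∀ x y s₁ s₂, 0 ≤ K₁ x y s₁ s₂)
    (hK₂0 : ∀ x y s₁ s₂, 0 ≤ K₂ x y s₁ s₂) (hK₁₂0 : ∀ x y s₁ s₂, 0 ≤ K₁₂ x y s₁ s₂)
    (hU0 : ∀ x y, 0 ≤ U x y) (hQ0 : ∀ x y, 0 ≤ Q x y)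
    (hKm : ∀ x x' y y' s₁ s₂ : ℝ, 0 ≤ x → x ≤ x' → 0 ≤ y → y ≤ y' →
      0 ≤ s₁ → 0 ≤ s₂ → K x y s₁ s₂ ≤ K x' y' s₁ s₂)
    (hineq : ∀ x y : ℝ, 0 ≤ x → 0 ≤ y → U x y ≤ P x y + Q x y * pachV K U x y)
    {r w : ℝ} (hr : 0 ≤ r) (hw : 0 ≤ w) :
    pachE K K₁ K₂ K₁₂ U r w
      ≤ pachE K K₁ K₂ K₁₂ P r w + pachE K K₁ K₂ K₁₂ Q r w * pachV K U r w := by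
  set cV := pachV K U r w with hcV
  have hub : ∀ s₁ s₂ : ℝ, 0 ≤ s₁ → s₁ ≤ r → 0 ≤ s₂ → s₂ ≤ w →
      U s₁ s₂ ≤ P s₁ s₂ + Q s₁ s₂ * cV := by
    intro s₁ s₂ h1 h2 h3 h4
    refine (hineq s₁ s₂ h1 h3).trans (add_le_add le_rfl ?_)
    exact mul_le_mul_of_nonneg_left (monoV hKc hUc hK0 hU0 hKm h1 h2 h3 h4) (hQ0 _ _)
  have cPQ : Continuous fun z : ℝ × ℝ => P z.1 z.2 + Q z.1 z.2 * cV :=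
    hPc.add (hQc.mul continuous_const)
  -- term 1
  have h1 : K r w r w * U r w ≤ K r w r w * P r w + (K r w r w * Q r w) * cV := by
    have := mul_le_mul_of_nonneg_left (hub r w hr le_rfl hw le_rfl) (hK0 r w r w)
    nlinarith [this]
  -- term 2
  have h2 : (∫ s in (0:ℝ)..w, K₂ r w r s * U r s)
      ≤ (∫ s in (0:ℝ)..w, K₂ r w r s * P r s)
        + (∫ s in (0:ℝ)..w, K₂ r w r s * Q r s) * cV := by
    have m : (∫ s in (0:ℝ)..w, K₂ r w r s * U r s)
        ≤ ∫ s in (0:ℝ)..w, (K₂ r w r s * P r s + (K₂ r w r s * Q r s) * cV) := by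
      apply intervalIntegral.integral_mono_on hw
        (((cont4 hK₂c (by fun_prop) (by fun_prop) (by fun_prop) (by fun_prop)).mul
          (cont2 hUc (by fun_prop) (by fun_prop))).intervalIntegrable 0 w)
        ((((cont4 hK₂c (by fun_prop) (by fun_prop) (by fun_prop) (by fun_prop)).mul
          (cont2 hPc (by fun_prop) (by fun_prop))).add
          (((cont4 hK₂c (by fun_prop) (by fun_prop) (by fun_prop) (by fun_prop)).mul
          (cont2 hQc (by fun_prop) (by fun_prop))).mul continuous_const)).intervalIntegrable 0 w)
      intro s hs
      simp only [Pi.mul_apply, Pi.add_apply]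
      have := mul_le_mul_of_nonneg_left (hub r s hr le_rfl hs.1 hs.2) (hK₂0 r w r s)
      nlinarith [this]
    refine m.trans_eq ?_
    rw [intervalIntegral.integral_add (f := fun s => K₂ r w r s * P r s)
      (g := fun s => K₂ r w r s * Q r s * cV)
      (((cont4 hK₂c (by fun_prop) (by fun_prop) (by fun_prop) (by fun_prop)).mul
        (cont2 hPc (by fun_prop) (by fun_prop))).intervalIntegrable 0 w)
      ((((cont4 hK₂c (by fun_prop) (by fun_prop) (by fun_prop) (by fun_prop)).mul
        (cont2 hQc (by fun_prop) (by fun_prop))).mul continuous_const).intervalIntegrable 0 w),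
      intervalIntegral.integral_mul_const]
  -- term 3
  have h3 : (∫ s in (0:ℝ)..r, K₁ r w s w * U s w)
      ≤ (∫ s in (0:ℝ)..r, K₁ r w s w * P s w)
        + (∫ s in (0:ℝ)..r, K₁ r w s w * Q s w) * cV := by
    have m : (∫ s in (0:ℝ)..r, K₁ r w s w * U s w)
        ≤ ∫ s in (0:ℝ)..r, (K₁ r w s w * P s w + (K₁ r w s w * Q s w) * cV) := by
      apply intervalIntegral.integral_mono_on hr
        (((cont4 hK₁c (by fun_prop) (by fun_prop) (by fun_prop) (by fun_prop)).mul
          (cont2 hUc (by fun_prop) (by fun_prop))).intervalIntegrable 0 r)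
        ((((cont4 hK₁c (by fun_prop) (by fun_prop) (by fun_prop) (by fun_prop)).mul
          (cont2 hPc (by fun_prop) (by fun_prop))).add
          (((cont4 hK₁c (by fun_prop) (by fun_prop) (by fun_prop) (by fun_prop)).mul
          (cont2 hQc (by fun_prop) (by fun_prop))).mul continuous_const)).intervalIntegrable 0 r)
      intro s hs
      simp only [Pi.mul_apply, Pi.add_apply]
      have := mul_le_mul_of_nonneg_left (hub s w hs.1 hs.2 hw le_rfl) (hK₁0 r w s w)
      nlinarith [this]
    refine m.trans_eq ?_
    rw [intervalIntegral.integral_add (f := fun s => K₁ r w s w * P s w)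
      (g := fun s => K₁ r w s w * Q s w * cV)
      (((cont4 hK₁c (by fun_prop) (by fun_prop) (by fun_prop) (by fun_prop)).mul
        (cont2 hPc (by fun_prop) (by fun_prop))).intervalIntegrable 0 r)
      ((((cont4 hK₁c (by fun_prop) (by fun_prop) (by fun_prop) (by fun_prop)).mul
        (cont2 hQc (by fun_prop) (by fun_prop))).mul continuous_const).intervalIntegrable 0 r),
      intervalIntegral.integral_mul_const]
  -- term 4
  have cInW : ∀ (W : ℝ → ℝ → ℝ), (Continuous fun z : ℝ × ℝ => W z.1 z.2) →
      Continuous fun s₁ : ℝ => ∫ s₂ in (0:ℝ)..w, K₁₂ r w s₁ s₂ * W s₁ s₂ := by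
    intro W hWc
    exact continuous_parametric_intervalIntegral_of_continuous'
      (f := fun (s₁ : ℝ) (s₂ : ℝ) => K₁₂ r w s₁ s₂ * W s₁ s₂)
      ((cont4 hK₁₂c (by fun_prop) (by fun_prop) (by fun_prop) (by fun_prop)).mul
        (cont2 hWc (by fun_prop) (by fun_prop))) 0 w
  have h4 : pachV K₁₂ U r w ≤ pachV K₁₂ P r w + pachV K₁₂ Q r w * cV := by
    have m : pachV K₁₂ U r w
        ≤ ∫ s₁ in (0:ℝ)..r, ((∫ s₂ in (0:ℝ)..w, K₁₂ r w s₁ s₂ * P s₁ s₂)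
            + (∫ s₂ in (0:ℝ)..w, K₁₂ r w s₁ s₂ * Q s₁ s₂) * cV) := by
      apply intervalIntegral.integral_mono_on hr
        ((cInW U hUc).intervalIntegrable 0 r)
        (((cInW P hPc).add ((cInW Q hQc).mul continuous_const)).intervalIntegrable 0 r)
      intro s₁ hs₁
      simp only [Pi.mul_apply, Pi.add_apply]
      have minner : (∫ s₂ in (0:ℝ)..w, K₁₂ r w s₁ s₂ * U s₁ s₂)
          ≤ ∫ s₂ in (0:ℝ)..w, (K₁₂ r w s₁ s₂ * P s₁ s₂ + (K₁₂ r w s₁ s₂ * Q s₁ s₂) * cV) := by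
        apply intervalIntegral.integral_mono_on hw
          (((cont4 hK₁₂c (by fun_prop) (by fun_prop) (by fun_prop) (by fun_prop)).mul
            (cont2 hUc (by fun_prop) (by fun_prop))).intervalIntegrable 0 w)
          ((((cont4 hK₁₂c (by fun_prop) (by fun_prop) (by fun_prop) (by fun_prop)).mul
            (cont2 hPc (by fun_prop) (by fun_prop))).add
            (((cont4 hK₁₂c (by fun_prop) (by fun_prop) (by fun_prop) (by fun_prop)).mul
            (cont2 hQc (by fun_prop) (by fun_prop))).mul continuous_const)).intervalIntegrable 0 w)
        intro s₂ hs₂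
        simp only [Pi.mul_apply, Pi.add_apply]
        have := mul_le_mul_of_nonneg_left (hub s₁ s₂ hs₁.1 hs₁.2 hs₂.1 hs₂.2) (hK₁₂0 r w s₁ s₂)
        nlinarith [this]
      refine minner.trans_eq ?_
      rw [intervalIntegral.integral_add (f := fun s₂ => K₁₂ r w s₁ s₂ * P s₁ s₂)
        (g := fun s₂ => K₁₂ r w s₁ s₂ * Q s₁ s₂ * cV)
        (((cont4 hK₁₂c (by fun_prop) (by fun_prop) (by fun_prop) (by fun_prop)).mul
          (cont2 hPc (by fun_prop) (by fun_prop))).intervalIntegrable 0 w)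
        ((((cont4 hK₁₂c (by fun_prop) (by fun_prop) (by fun_prop) (by fun_prop)).mul
          (cont2 hQc (by fun_prop) (by fun_prop))).mul continuous_const).intervalIntegrable 0 w),
        intervalIntegral.integral_mul_const]
    refine m.trans_eq ?_
    rw [intervalIntegral.integral_add
      (f := fun s₁ => ∫ s₂ in (0:ℝ)..w, K₁₂ r w s₁ s₂ * P s₁ s₂)
      (g := fun s₁ => (∫ s₂ in (0:ℝ)..w, K₁₂ r w s₁ s₂ * Q s₁ s₂) * cV)
      ((cInW P hPc).intervalIntegrable 0 r)
      (((cInW Q hQc).mul continuous_const).intervalIntegrable 0 r),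
      intervalIntegral.integral_mul_const]
    rfl
  show pachE K K₁ K₂ K₁₂ U r w ≤ _
  unfold pachE
  have goal_eq : pachE K K₁ K₂ K₁₂ P r w + pachE K K₁ K₂ K₁₂ Q r w * cV
      = (K r w r w * P r w + (K r w r w * Q r w) * cV)
        + ((∫ s in (0:ℝ)..w, K₂ r w r s * P r s)
          + (∫ s in (0:ℝ)..w, K₂ r w r s * Q r s) * cV)
        + ((∫ s in (0:ℝ)..r, K₁ r w s w * P s w)
          + (∫ s in (0:ℝ)..r, K₁ r w s w * Q s w) * cV)
        + (pachV K₁₂ P r w + pachV K₁₂ Q r w * cV) := by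
    unfold pachE
    ring
  calc K r w r w * U r w + (∫ s in (0:ℝ)..w, K₂ r w r s * U r s)
        + (∫ s in (0:ℝ)..r, K₁ r w s w * U s w) + pachV K₁₂ U r w
      ≤ (K r w r w * P r w + (K r w r w * Q r w) * cV)
        + ((∫ s in (0:ℝ)..w, K₂ r w r s * P r s)
          + (∫ s in (0:ℝ)..w, K₂ r w r s * Q r s) * cV)
        + ((∫ s in (0:ℝ)..r, K₁ r w s w * P s w)
          + (∫ s in (0:ℝ)..r, K₁ r w s w * Q s w) * cV)
        + (pachV K₁₂ P r w + pachV K₁₂ Q r w * cV) :=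
      add_le_add (add_le_add (add_le_add h1 h2) h3) h4
    _ = pachE K K₁ K₂ K₁₂ P r w + pachE K K₁ K₂ K₁₂ Q r w * cV := goal_eq.symm


lemma identV {K K₁ K₂ K₁₂ : ℝ → ℝ → ℝ → ℝ → ℝ} {U : ℝ → ℝ → ℝ}
    (hKc : Continuous fun z : ℝ × ℝ × ℝ × ℝ => K z.1 z.2.1 z.2.2.1 z.2.2.2)
    (hK₁c : Continuous fun z : ℝ × ℝ × ℝ × ℝ => K₁ z.1 z.2.1 z.2.2.1 z.2.2.2)
    (hK₂c : Continuous fun z : ℝ × ℝ × ℝ × ℝ => K₂ z.1 z.2.1 z.2.2.1 z.2.2.2)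
    (hK₁₂c : Continuous fun z : ℝ × ℝ × ℝ × ℝ => K₁₂ z.1 z.2.1 z.2.2.1 z.2.2.2)
    (hUc : Continuous fun z : ℝ × ℝ => U z.1 z.2)
    (hK₁f : ∀ y s₁ s₂ : ℝ, 0 ≤ y → 0 ≤ s₁ → 0 ≤ s₂ → ∀ a x : ℝ, 0 ≤ a → 0 ≤ x →
      (∫ r in a..x, K₁ r y s₁ s₂) = K x y s₁ s₂ - K a y s₁ s₂)
    (hK₂f : ∀ x s₁ s₂ : ℝ, 0 ≤ x → 0 ≤ s₁ → 0 ≤ s₂ → ∀ a y : ℝ, 0 ≤ a → 0 ≤ y →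
      (∫ r in a..y, K₂ x r s₁ s₂) = K x y s₁ s₂ - K x a s₁ s₂)
    (hK₁₂f : ∀ x s₁ s₂ : ℝ, 0 ≤ x → 0 ≤ s₁ → 0 ≤ s₂ → ∀ a y : ℝ, 0 ≤ a → 0 ≤ y →
      (∫ r in a..y, K₁₂ x r s₁ s₂) = K₁ x y s₁ s₂ - K₁ x a s₁ s₂)
    {x y : ℝ} (hx : 0 ≤ x) (hy : 0 ≤ y) :
    pachV K U x y = ∫ r in (0:ℝ)..x, ∫ w in (0:ℝ)..y, pachE K K₁ K₂ K₁₂ U r w := by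
  have I1 : ∀ r : ℝ, 0 ≤ r → (∫ w in (0:ℝ)..y, pachE K K₁ K₂ K₁₂ U r w)
      = (∫ s in (0:ℝ)..y, K r y r s * U r s)
        + ∫ s₁ in (0:ℝ)..r, ∫ s₂ in (0:ℝ)..y, K₁ r y s₁ s₂ * U s₁ s₂ := by
    intro r hr
    have cT1 : Continuous fun w => K r w r w * U r w :=
      (cont4 hKc (by fun_prop) (by fun_prop) (by fun_prop) (by fun_prop)).mul
        (cont2 hUc (by fun_prop) (by fun_prop))
    have cK2in : Continuous fun p : ℝ × ℝ => K₂ r p.1 r p.2 * U r p.2 :=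
      (cont4 hK₂c (by fun_prop) (by fun_prop) (by fun_prop) (by fun_prop)).mul
        (cont2 hUc (by fun_prop) (by fun_prop))
    have cT2 : Continuous fun w : ℝ => ∫ s in (0:ℝ)..w, K₂ r w r s * U r s :=
      continuous_parametric_intervalIntegral_of_continuous
        (f := fun (w : ℝ) (s : ℝ) => K₂ r w r s * U r s) cK2in continuous_id
    have cK1in : Continuous fun p : ℝ × ℝ => K₁ r p.1 p.2 p.1 * U p.2 p.1 :=
      (cont4 hK₁c (by fun_prop) (by fun_prop) (by fun_prop) (by fun_prop)).mul
        (cont2 hUc (by fun_prop) (by fun_prop))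
    have cT3 : Continuous fun w : ℝ => ∫ s in (0:ℝ)..r, K₁ r w s w * U s w :=
      continuous_parametric_intervalIntegral_of_continuous'
        (f := fun (w : ℝ) (s : ℝ) => K₁ r w s w * U s w) cK1in 0 r
    have cT4 : Continuous fun w : ℝ => pachV K₁₂ U r w := by
      have h := (contV hK₁₂c hUc).comp
        ((continuous_const.prodMk continuous_id) : Continuous fun w : ℝ => ((r, w) : ℝ × ℝ))
      exact h
    have split : (∫ w in (0:ℝ)..y, pachE K K₁ K₂ K₁₂ U r w)
        = (∫ w in (0:ℝ)..y, K r w r w * U r w)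
          + (∫ w in (0:ℝ)..y, ∫ s in (0:ℝ)..w, K₂ r w r s * U r s)
          + (∫ w in (0:ℝ)..y, ∫ s in (0:ℝ)..r, K₁ r w s w * U s w)
          + ∫ w in (0:ℝ)..y, pachV K₁₂ U r w := by
      unfold pachE
      rw [integral_add (f := fun w => K r w r w * U r w + (∫ s in (0:ℝ)..w, K₂ r w r s * U r s)
            + ∫ s in (0:ℝ)..r, K₁ r w s w * U s w) (g := fun w => pachV K₁₂ U r w)
          (((cT1.add cT2).add cT3).intervalIntegrable 0 y)
          (cT4.intervalIntegrable 0 y),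
        integral_add (f := fun w => K r w r w * U r w + ∫ s in (0:ℝ)..w, K₂ r w r s * U r s)
          (g := fun w => ∫ s in (0:ℝ)..r, K₁ r w s w * U s w)
          ((cT1.add cT2).intervalIntegrable 0 y) (cT3.intervalIntegrable 0 y),
        integral_add (f := fun w => K r w r w * U r w)
          (g := fun w => ∫ s in (0:ℝ)..w, K₂ r w r s * U r s)
          (cT1.intervalIntegrable 0 y) (cT2.intervalIntegrable 0 y)]
    have hT2 : (∫ w in (0:ℝ)..y, ∫ s in (0:ℝ)..w, K₂ r w r s * U r s)
        = ∫ s in (0:ℝ)..y, (K r y r s - K r s r s) * U r s := by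
      rw [swap_tri (f := fun w s => K₂ r w r s * U r s) cK2in hy]
      apply intervalIntegral.integral_congr
      intro s hs
      rw [uIcc_of_le hy] at hs
      show (∫ w in s..y, K₂ r w r s * U r s) = _
      rw [intervalIntegral.integral_mul_const, hK₂f r r s hr hr hs.1 s y hs.1 hy]
    have cT2' : Continuous fun s => (K r y r s - K r s r s) * U r s :=
      (((cont4 hKc (by fun_prop) (by fun_prop) (by fun_prop) (by fun_prop)).sub
        (cont4 hKc (by fun_prop) (by fun_prop) (by fun_prop) (by fun_prop))).mul
        (cont2 hUc (by fun_prop) (by fun_prop)))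
    have hT12 : (∫ w in (0:ℝ)..y, K r w r w * U r w)
        + (∫ s in (0:ℝ)..y, (K r y r s - K r s r s) * U r s)
        = ∫ s in (0:ℝ)..y, K r y r s * U r s := by
      rw [← intervalIntegral.integral_add (cT1.intervalIntegrable 0 y)
        (cT2'.intervalIntegrable 0 y)]
      apply intervalIntegral.integral_congr
      intro s _
      show K r s r s * U r s + (K r y r s - K r s r s) * U r s = K r y r s * U r s
      ring
    have cK12in : Continuous fun p : ℝ × ℝ × ℝ => K₁₂ r p.1 p.2.1 p.2.2 * U p.2.1 p.2.2 :=
      (cont4 hK₁₂c (by fun_prop) (by fun_prop) (by fun_prop) (by fun_prop)).mul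
        (cont2 hUc (by fun_prop) (by fun_prop))
    have cT4in : Continuous fun p : ℝ × ℝ => ∫ s₂ in (0:ℝ)..p.1, K₁₂ r p.1 p.2 s₂ * U p.2 s₂ :=
      continuous_parametric_intervalIntegral_of_continuous
        (f := fun (p : ℝ × ℝ) (s₂ : ℝ) => K₁₂ r p.1 p.2 s₂ * U p.2 s₂)
        ((cont4 hK₁₂c (by fun_prop) (by fun_prop) (by fun_prop) (by fun_prop)).mul
          (cont2 hUc (by fun_prop) (by fun_prop))) continuous_fst
    have hT4 : (∫ w in (0:ℝ)..y, pachV K₁₂ U r w)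
        = ∫ s₁ in (0:ℝ)..r, ∫ s₂ in (0:ℝ)..y, (K₁ r y s₁ s₂ - K₁ r s₂ s₁ s₂) * U s₁ s₂ := by
      simp only [pachV]
      rw [swap_rect' (f := fun w s₁ => ∫ s₂ in (0:ℝ)..w, K₁₂ r w s₁ s₂ * U s₁ s₂) cT4in hy hr]
      apply intervalIntegral.integral_congr
      intro s₁ hs₁
      rw [uIcc_of_le hr] at hs₁
      show (∫ w in (0:ℝ)..y, ∫ s₂ in (0:ℝ)..w, K₁₂ r w s₁ s₂ * U s₁ s₂)
        = ∫ s₂ in (0:ℝ)..y, (K₁ r y s₁ s₂ - K₁ r s₂ s₁ s₂) * U s₁ s₂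
      rw [swap_tri (f := fun w s₂ => K₁₂ r w s₁ s₂ * U s₁ s₂)
        ((cont4 hK₁₂c (by fun_prop) (by fun_prop) (by fun_prop) (by fun_prop)).mul
          (cont2 hUc (by fun_prop) (by fun_prop))) hy]
      apply intervalIntegral.integral_congr
      intro s₂ hs₂
      rw [uIcc_of_le hy] at hs₂
      show (∫ w in s₂..y, K₁₂ r w s₁ s₂ * U s₁ s₂) = _
      rw [intervalIntegral.integral_mul_const, hK₁₂f r s₁ s₂ hr hs₁.1 hs₂.1 s₂ y hs₂.1 hy]
    have hT3 : (∫ w in (0:ℝ)..y, ∫ s in (0:ℝ)..r, K₁ r w s w * U s w)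
        = ∫ s in (0:ℝ)..r, ∫ w in (0:ℝ)..y, K₁ r w s w * U s w :=
      swap_rect' (f := fun w s => K₁ r w s w * U s w) cK1in hy hr
    have c34a : Continuous fun s₁ : ℝ => ∫ w in (0:ℝ)..y, K₁ r w s₁ w * U s₁ w :=
      continuous_parametric_intervalIntegral_of_continuous'
        (f := fun (s₁ : ℝ) (w : ℝ) => K₁ r w s₁ w * U s₁ w)
        ((cont4 hK₁c (by fun_prop) (by fun_prop) (by fun_prop) (by fun_prop)).mul
          (cont2 hUc (by fun_prop) (by fun_prop))) 0 y
    have c34b : Continuous fun s₁ : ℝ =>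
        ∫ s₂ in (0:ℝ)..y, (K₁ r y s₁ s₂ - K₁ r s₂ s₁ s₂) * U s₁ s₂ :=
      continuous_parametric_intervalIntegral_of_continuous'
        (f := fun (s₁ : ℝ) (s₂ : ℝ) => (K₁ r y s₁ s₂ - K₁ r s₂ s₁ s₂) * U s₁ s₂)
        (((cont4 hK₁c (by fun_prop) (by fun_prop) (by fun_prop) (by fun_prop)).sub
          (cont4 hK₁c (by fun_prop) (by fun_prop) (by fun_prop) (by fun_prop))).mul
          (cont2 hUc (by fun_prop) (by fun_prop))) 0 y
    have hT34 : (∫ s₁ in (0:ℝ)..r, ∫ w in (0:ℝ)..y, K₁ r w s₁ w * U s₁ w)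
        + (∫ s₁ in (0:ℝ)..r, ∫ s₂ in (0:ℝ)..y, (K₁ r y s₁ s₂ - K₁ r s₂ s₁ s₂) * U s₁ s₂)
        = ∫ s₁ in (0:ℝ)..r, ∫ s₂ in (0:ℝ)..y, K₁ r y s₁ s₂ * U s₁ s₂ := by
      rw [← intervalIntegral.integral_add (c34a.intervalIntegrable 0 r)
        (c34b.intervalIntegrable 0 r)]
      apply intervalIntegral.integral_congr
      intro s₁ _
      show (∫ w in (0:ℝ)..y, K₁ r w s₁ w * U s₁ w)
          + (∫ s₂ in (0:ℝ)..y, (K₁ r y s₁ s₂ - K₁ r s₂ s₁ s₂) * U s₁ s₂)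
        = ∫ s₂ in (0:ℝ)..y, K₁ r y s₁ s₂ * U s₁ s₂
      have ca : Continuous fun w => K₁ r w s₁ w * U s₁ w :=
        (cont4 hK₁c (by fun_prop) (by fun_prop) (by fun_prop) (by fun_prop)).mul
          (cont2 hUc (by fun_prop) (by fun_prop))
      have cb : Continuous fun s₂ => (K₁ r y s₁ s₂ - K₁ r s₂ s₁ s₂) * U s₁ s₂ :=
        ((cont4 hK₁c (by fun_prop) (by fun_prop) (by fun_prop) (by fun_prop)).sub
          (cont4 hK₁c (by fun_prop) (by fun_prop) (by fun_prop) (by fun_prop))).mul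
          (cont2 hUc (by fun_prop) (by fun_prop))
      rw [← intervalIntegral.integral_add (ca.intervalIntegrable 0 y)
        (cb.intervalIntegrable 0 y)]
      apply intervalIntegral.integral_congr
      intro s₂ _
      show K₁ r s₂ s₁ s₂ * U s₁ s₂ + (K₁ r y s₁ s₂ - K₁ r s₂ s₁ s₂) * U s₁ s₂
        = K₁ r y s₁ s₂ * U s₁ s₂
      ring
    rw [split, hT2, hT3, hT4]
    calc (∫ w in (0:ℝ)..y, K r w r w * U r w)
          + (∫ s in (0:ℝ)..y, (K r y r s - K r s r s) * U r s)
          + (∫ s₁ in (0:ℝ)..r, ∫ w in (0:ℝ)..y, K₁ r w s₁ w * U s₁ w)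
          + (∫ s₁ in (0:ℝ)..r, ∫ s₂ in (0:ℝ)..y, (K₁ r y s₁ s₂ - K₁ r s₂ s₁ s₂) * U s₁ s₂)
        = ((∫ w in (0:ℝ)..y, K r w r w * U r w)
          + (∫ s in (0:ℝ)..y, (K r y r s - K r s r s) * U r s))
          + ((∫ s₁ in (0:ℝ)..r, ∫ w in (0:ℝ)..y, K₁ r w s₁ w * U s₁ w)
          + (∫ s₁ in (0:ℝ)..r, ∫ s₂ in (0:ℝ)..y, (K₁ r y s₁ s₂ - K₁ r s₂ s₁ s₂) * U s₁ s₂)) := by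
          ring
      _ = (∫ s in (0:ℝ)..y, K r y r s * U r s)
          + ∫ s₁ in (0:ℝ)..r, ∫ s₂ in (0:ℝ)..y, K₁ r y s₁ s₂ * U s₁ s₂ := by
          rw [hT12, hT34]
  -- outer integration
  have cP1 : Continuous fun r : ℝ => ∫ s in (0:ℝ)..y, K r y r s * U r s :=
    continuous_parametric_intervalIntegral_of_continuous'
      (f := fun (r : ℝ) (s : ℝ) => K r y r s * U r s)
      ((cont4 hKc (by fun_prop) (by fun_prop) (by fun_prop) (by fun_prop)).mul
        (cont2 hUc (by fun_prop) (by fun_prop))) 0 y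
  have cP2in : Continuous fun p : ℝ × ℝ => ∫ s₂ in (0:ℝ)..y, K₁ p.1 y p.2 s₂ * U p.2 s₂ :=
    continuous_parametric_intervalIntegral_of_continuous'
      (f := fun (p : ℝ × ℝ) (s₂ : ℝ) => K₁ p.1 y p.2 s₂ * U p.2 s₂)
      ((cont4 hK₁c (by fun_prop) (by fun_prop) (by fun_prop) (by fun_prop)).mul
        (cont2 hUc (by fun_prop) (by fun_prop))) 0 y
  have cP2 : Continuous fun r : ℝ =>
      ∫ s₁ in (0:ℝ)..r, ∫ s₂ in (0:ℝ)..y, K₁ r y s₁ s₂ * U s₁ s₂ :=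
    continuous_parametric_intervalIntegral_of_continuous
      (f := fun (r : ℝ) (s₁ : ℝ) => ∫ s₂ in (0:ℝ)..y, K₁ r y s₁ s₂ * U s₁ s₂)
      cP2in continuous_id
  have outer1 : (∫ r in (0:ℝ)..x, ∫ w in (0:ℝ)..y, pachE K K₁ K₂ K₁₂ U r w)
      = (∫ r in (0:ℝ)..x, ∫ s in (0:ℝ)..y, K r y r s * U r s)
        + ∫ r in (0:ℝ)..x, ∫ s₁ in (0:ℝ)..r, ∫ s₂ in (0:ℝ)..y, K₁ r y s₁ s₂ * U s₁ s₂ := by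
    rw [← intervalIntegral.integral_add (cP1.intervalIntegrable 0 x)
      (cP2.intervalIntegrable 0 x)]
    apply intervalIntegral.integral_congr
    intro r hr
    rw [uIcc_of_le hx] at hr
    exact I1 r hr.1
  have hP2 : (∫ r in (0:ℝ)..x, ∫ s₁ in (0:ℝ)..r, ∫ s₂ in (0:ℝ)..y, K₁ r y s₁ s₂ * U s₁ s₂)
      = ∫ s₁ in (0:ℝ)..x, ∫ s₂ in (0:ℝ)..y, (K x y s₁ s₂ - K s₁ y s₁ s₂) * U s₁ s₂ := by
    rw [swap_tri (f := fun r s₁ => ∫ s₂ in (0:ℝ)..y, K₁ r y s₁ s₂ * U s₁ s₂) cP2in hx]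
    apply intervalIntegral.integral_congr
    intro s₁ hs₁
    rw [uIcc_of_le hx] at hs₁
    show (∫ r in s₁..x, ∫ s₂ in (0:ℝ)..y, K₁ r y s₁ s₂ * U s₁ s₂)
      = ∫ s₂ in (0:ℝ)..y, (K x y s₁ s₂ - K s₁ y s₁ s₂) * U s₁ s₂
    rw [swap_rect' (f := fun r s₂ => K₁ r y s₁ s₂ * U s₁ s₂)
      ((cont4 hK₁c (by fun_prop) (by fun_prop) (by fun_prop) (by fun_prop)).mul
        (cont2 hUc (by fun_prop) (by fun_prop))) hs₁.2 hy]
    apply intervalIntegral.integral_congr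
    intro s₂ hs₂
    rw [uIcc_of_le hy] at hs₂
    show (∫ r in s₁..x, K₁ r y s₁ s₂ * U s₁ s₂) = _
    rw [intervalIntegral.integral_mul_const, hK₁f y s₁ s₂ hy hs₁.1 hs₂.1 s₁ x hs₁.1 hx]
  rw [outer1, hP2]
  have cQ1 : Continuous fun p : ℝ × ℝ => K p.1 y p.1 p.2 * U p.1 p.2 :=
    (cont4 hKc (by fun_prop) (by fun_prop) (by fun_prop) (by fun_prop)).mul
      (cont2 hUc (by fun_prop) (by fun_prop))
  have cQ1' : Continuous fun r : ℝ => ∫ s in (0:ℝ)..y, K r y r s * U r s := cP1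
  have cQ2 : Continuous fun s₁ : ℝ =>
      ∫ s₂ in (0:ℝ)..y, (K x y s₁ s₂ - K s₁ y s₁ s₂) * U s₁ s₂ :=
    continuous_parametric_intervalIntegral_of_continuous'
      (f := fun (s₁ : ℝ) (s₂ : ℝ) => (K x y s₁ s₂ - K s₁ y s₁ s₂) * U s₁ s₂)
      (((cont4 hKc (by fun_prop) (by fun_prop) (by fun_prop) (by fun_prop)).sub
        (cont4 hKc (by fun_prop) (by fun_prop) (by fun_prop) (by fun_prop))).mul
        (cont2 hUc (by fun_prop) (by fun_prop))) 0 y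
  rw [← intervalIntegral.integral_add (cQ1'.intervalIntegrable 0 x)
    (cQ2.intervalIntegrable 0 x)]
  unfold pachV
  apply intervalIntegral.integral_congr
  intro s₁ _
  show (∫ s₂ in (0:ℝ)..y, K x y s₁ s₂ * U s₁ s₂)
    = (∫ s in (0:ℝ)..y, K s₁ y s₁ s * U s₁ s)
      + ∫ s₂ in (0:ℝ)..y, (K x y s₁ s₂ - K s₁ y s₁ s₂) * U s₁ s₂
  have ca : Continuous fun s => K s₁ y s₁ s * U s₁ s :=
    (cont4 hKc (by fun_prop) (by fun_prop) (by fun_prop) (by fun_prop)).mul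
      (cont2 hUc (by fun_prop) (by fun_prop))
  have cb : Continuous fun s₂ => (K x y s₁ s₂ - K s₁ y s₁ s₂) * U s₁ s₂ :=
    ((cont4 hKc (by fun_prop) (by fun_prop) (by fun_prop) (by fun_prop)).sub
      (cont4 hKc (by fun_prop) (by fun_prop) (by fun_prop) (by fun_prop))).mul
      (cont2 hUc (by fun_prop) (by fun_prop))
  rw [← intervalIntegral.integral_add (ca.intervalIntegrable 0 y)
    (cb.intervalIntegrable 0 y)]
  apply intervalIntegral.integral_congr
  intro s₂ _
  show K x y s₁ s₂ * U s₁ s₂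
    = K s₁ y s₁ s₂ * U s₁ s₂ + (K x y s₁ s₂ - K s₁ y s₁ s₂) * U s₁ s₂
  ring


lemma pach_core {K K₁ K₂ K₁₂ : ℝ → ℝ → ℝ → ℝ → ℝ} {U P Q : ℝ → ℝ → ℝ}
    (hKc : Continuous fun z : ℝ × ℝ × ℝ × ℝ => K z.1 z.2.1 z.2.2.1 z.2.2.2)
    (hK₁c : Continuous fun z : ℝ × ℝ × ℝ × ℝ => K₁ z.1 z.2.1 z.2.2.1 z.2.2.2)
    (hK₂c : Continuous fun z : ℝ × ℝ × ℝ × ℝ => K₂ z.1 z.2.1 z.2.2.1 z.2.2.2)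
    (hK₁₂c : Continuous fun z : ℝ × ℝ × ℝ × ℝ => K₁₂ z.1 z.2.1 z.2.2.1 z.2.2.2)
    (hUc : Continuous fun z : ℝ × ℝ => U z.1 z.2)
    (hPc : Continuous fun z : ℝ × ℝ => P z.1 z.2)
    (hQc : Continuous fun z : ℝ × ℝ => Q z.1 z.2)
    (hK0 : ∀ x y s₁ s₂, 0 ≤ K x y s₁ s₂) (hK₁0 : ∀ x y s₁ s₂, 0 ≤ K₁ x y s₁ s₂)
    (hK₂0 : ∀ x y s₁ s₂, 0 ≤ K₂ x y s₁ s₂) (hK₁₂0 : ∀ x y s₁ s₂, 0 ≤ K₁₂ x y s₁ s₂)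
    (hU0 : ∀ x y, 0 ≤ U x y) (hP0 : ∀ x y, 0 ≤ P x y) (hQ0 : ∀ x y, 0 ≤ Q x y)
    (hK₁f : ∀ y s₁ s₂ : ℝ, 0 ≤ y → 0 ≤ s₁ → 0 ≤ s₂ → ∀ a x : ℝ, 0 ≤ a → 0 ≤ x →
      (∫ r in a..x, K₁ r y s₁ s₂) = K x y s₁ s₂ - K a y s₁ s₂)
    (hK₂f : ∀ x s₁ s₂ : ℝ, 0 ≤ x → 0 ≤ s₁ → 0 ≤ s₂ → ∀ a y : ℝ, 0 ≤ a → 0 ≤ y →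
      (∫ r in a..y, K₂ x r s₁ s₂) = K x y s₁ s₂ - K x a s₁ s₂)
    (hK₁₂f : ∀ x s₁ s₂ : ℝ, 0 ≤ x → 0 ≤ s₁ → 0 ≤ s₂ → ∀ a y : ℝ, 0 ≤ a → 0 ≤ y →
      (∫ r in a..y, K₁₂ x r s₁ s₂) = K₁ x y s₁ s₂ - K₁ x a s₁ s₂)
    (hineq : ∀ x y : ℝ, 0 ≤ x → 0 ≤ y → U x y ≤ P x y + Q x y * pachV K U x y)
    {t₁ t₂ : ℝ} (ht₁ : 0 ≤ t₁) (ht₂ : 0 ≤ t₂) :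
    pachV K U t₁ t₂ ≤ (∫ r in (0:ℝ)..t₁, ∫ w in (0:ℝ)..t₂, pachE K K₁ K₂ K₁₂ P r w) *
      Real.exp (∫ s in (0:ℝ)..t₁, ∫ w in (0:ℝ)..t₂, pachE K K₁ K₂ K₁₂ Q s w) := by
  -- monotonicity of K
  have hKm : ∀ x x' y y' s₁ s₂ : ℝ, 0 ≤ x → x ≤ x' → 0 ≤ y → y ≤ y' →
      0 ≤ s₁ → 0 ≤ s₂ → K x y s₁ s₂ ≤ K x' y' s₁ s₂ := by
    intro x x' y y' s₁ s₂ hx hxx hy hyy hs₁ hs₂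
    have hx' : 0 ≤ x' := hx.trans hxx
    have hy' : 0 ≤ y' := hy.trans hyy
    have h1 : K x y s₁ s₂ ≤ K x' y s₁ s₂ := by
      have := hK₁f y s₁ s₂ hy hs₁ hs₂ x x' hx hx'
      have hnn : 0 ≤ ∫ r in x..x', K₁ r y s₁ s₂ :=
        intervalIntegral.integral_nonneg hxx fun r _ => hK₁0 _ _ _ _
      linarith
    have h2 : K x' y s₁ s₂ ≤ K x' y' s₁ s₂ := by
      have := hK₂f x' s₁ s₂ hx' hs₁ hs₂ y y' hy hy'
      have hnn : 0 ≤ ∫ r in y..y', K₂ x' r s₁ s₂ :=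
        intervalIntegral.integral_nonneg hyy fun r _ => hK₂0 _ _ _ _
      linarith
    linarith
  set EP := pachE K K₁ K₂ K₁₂ P with hEP
  set EQ := pachE K K₁ K₂ K₁₂ Q with hEQ
  set EU := pachE K K₁ K₂ K₁₂ U with hEU
  have cEP : Continuous fun z : ℝ × ℝ => EP z.1 z.2 := contE hKc hK₁c hK₂c hK₁₂c hPc
  have cEQ : Continuous fun z : ℝ × ℝ => EQ z.1 z.2 := contE hKc hK₁c hK₂c hK₁₂c hQc
  have cEU : Continuous fun z : ℝ × ℝ => EU z.1 z.2 := contE hKc hK₁c hK₂c hK₁₂c hUc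
  have φcont : Continuous fun s : ℝ => pachV K U s t₂ := by
    have h := (contV hKc hUc).comp
      ((continuous_id.prodMk continuous_const) : Continuous fun s : ℝ => ((s, t₂) : ℝ × ℝ))
    exact h
  set φ := fun s : ℝ => pachV K U s t₂ with hφ
  set g := fun s : ℝ => ∫ w in (0:ℝ)..t₂, EQ s w with hg
  set AP := fun x : ℝ => ∫ r in (0:ℝ)..x, ∫ w in (0:ℝ)..t₂, EP r w with hAP
  have cg : Continuous g :=
    continuous_parametric_intervalIntegral_of_continuous'
      (f := fun (s : ℝ) (w : ℝ) => EQ s w) cEQ 0 t₂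
  have cIEP : Continuous fun r : ℝ => ∫ w in (0:ℝ)..t₂, EP r w :=
    continuous_parametric_intervalIntegral_of_continuous'
      (f := fun (r : ℝ) (w : ℝ) => EP r w) cEP 0 t₂
  have cIEU : Continuous fun r : ℝ => ∫ w in (0:ℝ)..t₂, EU r w :=
    continuous_parametric_intervalIntegral_of_continuous'
      (f := fun (r : ℝ) (w : ℝ) => EU r w) cEU 0 t₂
  have g0 : ∀ s : ℝ, 0 ≤ s → 0 ≤ g s := by
    intro s hs
    exact intervalIntegral.integral_nonneg ht₂ fun w hw =>
      nonnegE hKc hK0 hK₁0 hK₂0 hK₁₂0 hQ0 hs hw.1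
  -- key integral inequality
  have key : ∀ x : ℝ, 0 ≤ x → φ x ≤ AP x + ∫ s in (0:ℝ)..x, g s * φ s := by
    intro x hx
    have id1 : φ x = ∫ r in (0:ℝ)..x, ∫ w in (0:ℝ)..t₂, EU r w :=
      identV hKc hK₁c hK₂c hK₁₂c hUc hK₁f hK₂f hK₁₂f hx ht₂
    have mono1 : (∫ r in (0:ℝ)..x, ∫ w in (0:ℝ)..t₂, EU r w)
        ≤ ∫ r in (0:ℝ)..x, ((∫ w in (0:ℝ)..t₂, EP r w) + g r * φ r) := by
      apply intervalIntegral.integral_mono_on hx (cIEU.intervalIntegrable 0 x)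
        ((cIEP.add ((cg.mul φcont))).intervalIntegrable 0 x)
      intro r hr
      simp only [Pi.mul_apply, Pi.add_apply]
      have cEPr : Continuous fun w : ℝ => EP r w := cont2 cEP continuous_const continuous_id
      have cEQr : Continuous fun w : ℝ => EQ r w := cont2 cEQ continuous_const continuous_id
      have cEUr : Continuous fun w : ℝ => EU r w := cont2 cEU continuous_const continuous_id
      have inner : (∫ w in (0:ℝ)..t₂, EU r w)
          ≤ ∫ w in (0:ℝ)..t₂, (EP r w + EQ r w * φ r) := by
        apply intervalIntegral.integral_mono_on ht₂
          (cEUr.intervalIntegrable 0 t₂)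
          ((cEPr.add (cEQr.mul continuous_const)).intervalIntegrable 0 t₂)
        intro w hw
        have b1 : EU r w ≤ EP r w + EQ r w * pachV K U r w :=
          boundE hKc hK₁c hK₂c hK₁₂c hUc hPc hQc hK0 hK₁0 hK₂0 hK₁₂0 hU0 hQ0 hKm hineq
            hr.1 hw.1
        have b2 : pachV K U r w ≤ φ r :=
          monoV hKc hUc hK0 hU0 hKm hr.1 le_rfl hw.1 hw.2
        have b3 : 0 ≤ EQ r w := nonnegE hKc hK0 hK₁0 hK₂0 hK₁₂0 hQ0 hr.1 hw.1
        show EU r w ≤ EP r w + EQ r w * φ r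
        have b4 := mul_le_mul_of_nonneg_left b2 b3
        linarith
      refine inner.trans_eq ?_
      rw [intervalIntegral.integral_add (f := fun w => EP r w) (g := fun w => EQ r w * φ r)
        (cEPr.intervalIntegrable 0 t₂)
        ((cEQr.mul continuous_const).intervalIntegrable 0 t₂),
        intervalIntegral.integral_mul_const]
    have split : (∫ r in (0:ℝ)..x, ((∫ w in (0:ℝ)..t₂, EP r w) + g r * φ r))
        = AP x + ∫ s in (0:ℝ)..x, g s * φ s := by
      rw [intervalIntegral.integral_add (f := fun r => ∫ w in (0:ℝ)..t₂, EP r w)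
        (g := fun r => g r * φ r) (cIEP.intervalIntegrable 0 x)
        ((cg.mul φcont).intervalIntegrable 0 x)]
    rw [id1]
    exact mono1.trans_eq split
  -- Gronwall
  set D := AP t₁ with hD
  have hAPmono : ∀ x : ℝ, 0 ≤ x → x ≤ t₁ → AP x ≤ D := by
    intro x hx hxt
    apply intervalIntegral.integral_mono_interval le_rfl hx hxt
    · refine (ae_restrict_iff' measurableSet_Ioc).2 ?_
      filter_upwards with r hr
      exact intervalIntegral.integral_nonneg ht₂ fun w hw =>
        nonnegE hKc hK0 hK₁0 hK₂0 hK₁₂0 hP0 hr.1.le hw.1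
    · exact cIEP.intervalIntegrable 0 t₁
  have hD0 : 0 ≤ D := by
    apply intervalIntegral.integral_nonneg ht₁
    intro r hr
    exact intervalIntegral.integral_nonneg ht₂ fun w hw =>
      nonnegE hKc hK0 hK₁0 hK₂0 hK₁₂0 hP0 hr.1 hw.1
  set W := fun x : ℝ => ∫ s in (0:ℝ)..x, g s * φ s with hW
  set C := fun x : ℝ => ∫ s in (0:ℝ)..x, g s with hC
  have hW' : ∀ x : ℝ, HasDerivAt W (g x * φ x) x := by
    intro x
    exact intervalIntegral.integral_hasDerivAt_right
      ((cg.mul φcont).intervalIntegrable 0 x)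
      ((cg.mul φcont).stronglyMeasurableAtFilter _ _)
      (cg.mul φcont).continuousAt
  have hC' : ∀ x : ℝ, HasDerivAt C (g x) x := by
    intro x
    exact intervalIntegral.integral_hasDerivAt_right
      (cg.intervalIntegrable 0 x) (cg.stronglyMeasurableAtFilter _ _) cg.continuousAt
  set G := fun x : ℝ => (D + W x) * Real.exp (-C x) with hG
  have hG' : ∀ x : ℝ, HasDerivAt G
      ((g x * φ x) * Real.exp (-C x) + (D + W x) * (Real.exp (-C x) * -(g x))) x := by
    intro x
    exact ((hW' x).const_add D).mul ((hC' x).neg.exp)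
  have hGd : Differentiable ℝ G := fun x => (hG' x).differentiableAt
  have hGanti : AntitoneOn G (Icc 0 t₁) := by
    apply antitoneOn_of_deriv_nonpos (convex_Icc 0 t₁) hGd.continuous.continuousOn
      (hGd.differentiableOn)
    intro x hx
    rw [interior_Icc] at hx
    rw [(hG' x).deriv]
    have hx0 : 0 ≤ x := hx.1.le
    have hφW : φ x ≤ D + W x := by
      have := key x hx0
      have hAP := hAPmono x hx0 hx.2.le
      linarith
    have hgx := g0 x hx0
    have hexp : 0 ≤ Real.exp (-C x) := (Real.exp_pos _).le
    have hmul : g x * φ x ≤ g x * (D + W x) := mul_le_mul_of_nonneg_left hφW hgx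
    nlinarith [hmul, hexp, mul_le_mul_of_nonneg_right hmul hexp]
  have hG0 : G 0 = D := by
    simp only [hG, hW, hC, intervalIntegral.integral_same, neg_zero, Real.exp_zero,
      add_zero, mul_one]
  have hGle : G t₁ ≤ D := by
    have := hGanti (left_mem_Icc.2 ht₁) (right_mem_Icc.2 ht₁) ht₁
    rwa [hG0] at this
  have hfinal : D + W t₁ ≤ D * Real.exp (C t₁) := by
    have h := mul_le_mul_of_nonneg_right hGle (Real.exp_pos (C t₁)).le
    have he : Real.exp (-C t₁) * Real.exp (C t₁) = 1 := by
      rw [← Real.exp_add]; simp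
    calc D + W t₁ = (D + W t₁) * (Real.exp (-C t₁) * Real.exp (C t₁)) := by rw [he, mul_one]
      _ = (D + W t₁) * Real.exp (-C t₁) * Real.exp (C t₁) := by ring
      _ ≤ D * Real.exp (C t₁) := h
  have hφt : φ t₁ ≤ D * Real.exp (C t₁) := by
    have hk := key t₁ ht₁
    have : φ t₁ ≤ D + W t₁ := by
      have := hAPmono t₁ ht₁ le_rfl
      linarith
    linarith
  exact hφt


theorem pachpatte_general_kernel_real
    (u p q : ℝ → ℝ → ℝ) (k k₁ k₂ k₁₂ : ℝ → ℝ → ℝ → ℝ → ℝ)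
    (hu : ContinuousOn (fun z : ℝ × ℝ => u z.1 z.2) (Ici 0 ×ˢ Ici 0))
    (hp : ContinuousOn (fun z : ℝ × ℝ => p z.1 z.2) (Ici 0 ×ˢ Ici 0))
    (hq : ContinuousOn (fun z : ℝ × ℝ => q z.1 z.2) (Ici 0 ×ˢ Ici 0))
    (hu0 : ∀ t₁ t₂ : ℝ, 0 ≤ t₁ → 0 ≤ t₂ → 0 ≤ u t₁ t₂)
    (hp0 : ∀ t₁ t₂ : ℝ, 0 ≤ t₁ → 0 ≤ t₂ → 0 ≤ p t₁ t₂)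
    (hq0 : ∀ t₁ t₂ : ℝ, 0 ≤ t₁ → 0 ≤ t₂ → 0 ≤ q t₁ t₂)
    -- k is C² in its first two variables, with the indicated partial derivatives
    (hk₁ : ∀ t₁ t₂ s₁ s₂ : ℝ, 0 ≤ t₁ → 0 ≤ t₂ → 0 ≤ s₁ → 0 ≤ s₂ →
      HasDerivAt (fun x => k x t₂ s₁ s₂) (k₁ t₁ t₂ s₁ s₂) t₁)
    (hk₂ : ∀ t₁ t₂ s₁ s₂ : ℝ, 0 ≤ t₁ → 0 ≤ t₂ → 0 ≤ s₁ → 0 ≤ s₂ →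
      HasDerivAt (fun y => k t₁ y s₁ s₂) (k₂ t₁ t₂ s₁ s₂) t₂)
    (hk₁₂ : ∀ t₁ t₂ s₁ s₂ : ℝ, 0 ≤ t₁ → 0 ≤ t₂ → 0 ≤ s₁ → 0 ≤ s₂ →
      HasDerivAt (fun y => k₁ t₁ y s₁ s₂) (k₁₂ t₁ t₂ s₁ s₂) t₂)
    (hkc : ContinuousOn (fun z : ℝ × ℝ × ℝ × ℝ => k z.1 z.2.1 z.2.2.1 z.2.2.2)
      (Ici 0 ×ˢ Ici 0 ×ˢ Ici 0 ×ˢ Ici 0))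
    (hk₁c : ContinuousOn (fun z : ℝ × ℝ × ℝ × ℝ => k₁ z.1 z.2.1 z.2.2.1 z.2.2.2)
      (Ici 0 ×ˢ Ici 0 ×ˢ Ici 0 ×ˢ Ici 0))
    (hk₂c : ContinuousOn (fun z : ℝ × ℝ × ℝ × ℝ => k₂ z.1 z.2.1 z.2.2.1 z.2.2.2)
      (Ici 0 ×ˢ Ici 0 ×ˢ Ici 0 ×ˢ Ici 0))
    (hk₁₂c : ContinuousOn (fun z : ℝ × ℝ × ℝ × ℝ => k₁₂ z.1 z.2.1 z.2.2.1 z.2.2.2)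
      (Ici 0 ×ˢ Ici 0 ×ˢ Ici 0 ×ˢ Ici 0))
    (hk0 : ∀ t₁ t₂ s₁ s₂ : ℝ, 0 ≤ t₁ → 0 ≤ t₂ → 0 ≤ s₁ → 0 ≤ s₂ → 0 ≤ k t₁ t₂ s₁ s₂)
    (hk₁0 : ∀ t₁ t₂ s₁ s₂ : ℝ, 0 ≤ t₁ → 0 ≤ t₂ → 0 ≤ s₁ → 0 ≤ s₂ → 0 ≤ k₁ t₁ t₂ s₁ s₂)
    (hk₂0 : ∀ t₁ t₂ s₁ s₂ : ℝ, 0 ≤ t₁ → 0 ≤ t₂ → 0 ≤ s₁ → 0 ≤ s₂ → 0 ≤ k₂ t₁ t₂ s₁ s₂)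
    (hk₁₂0 : ∀ t₁ t₂ s₁ s₂ : ℝ, 0 ≤ t₁ → 0 ≤ t₂ → 0 ≤ s₁ → 0 ≤ s₂ → 0 ≤ k₁₂ t₁ t₂ s₁ s₂)
    (hineq : ∀ t₁ t₂ : ℝ, 0 ≤ t₁ → 0 ≤ t₂ →
      u t₁ t₂ ≤ p t₁ t₂ + q t₁ t₂ *
        ∫ s₁ in (0:ℝ)..t₁, ∫ s₂ in (0:ℝ)..t₂, k t₁ t₂ s₁ s₂ * u s₁ s₂)
    (a b A c : ℝ → ℝ → ℝ)
    (ha : ∀ t₁ t₂ : ℝ, a t₁ t₂ =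
      k t₁ t₂ t₁ t₂ * p t₁ t₂ +
      (∫ s₂ in (0:ℝ)..t₂, k₂ t₁ t₂ t₁ s₂ * p t₁ s₂) +
      (∫ s₁ in (0:ℝ)..t₁, k₁ t₁ t₂ s₁ t₂ * p s₁ t₂) +
      ∫ s₁ in (0:ℝ)..t₁, ∫ s₂ in (0:ℝ)..t₂, k₁₂ t₁ t₂ s₁ s₂ * p s₁ s₂)
    (hb : ∀ t₁ t₂ : ℝ, b t₁ t₂ =
      k t₁ t₂ t₁ t₂ * q t₁ t₂ +
      (∫ s₂ in (0:ℝ)..t₂, k₂ t₁ t₂ t₁ s₂ * q t₁ s₂) +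
      (∫ s₁ in (0:ℝ)..t₁, k₁ t₁ t₂ s₁ t₂ * q s₁ t₂) +
      ∫ s₁ in (0:ℝ)..t₁, ∫ s₂ in (0:ℝ)..t₂, k₁₂ t₁ t₂ s₁ s₂ * q s₁ s₂)
    (hA : ∀ t₁ t₂ : ℝ, A t₁ t₂ = ∫ s₁ in (0:ℝ)..t₁, ∫ s₂ in (0:ℝ)..t₂, a s₁ s₂)
    (hc : ∀ t₁ t₂ : ℝ, c t₁ t₂ = ∫ s₂ in (0:ℝ)..t₂, b t₁ s₂) :
    ∀ t₁ t₂ : ℝ, 0 ≤ t₁ → 0 ≤ t₂ →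
      u t₁ t₂ ≤ p t₁ t₂ + q t₁ t₂ * A t₁ t₂ *
        Real.exp (∫ s₁ in (0:ℝ)..t₁, c s₁ t₂) := by
  intro T1 T2 hT1 hT2
  -- extensions
  set U' : ℝ → ℝ → ℝ := fun x y => u (max x 0) (max y 0) with hU'def
  set P' : ℝ → ℝ → ℝ := fun x y => p (max x 0) (max y 0) with hP'def
  set Q' : ℝ → ℝ → ℝ := fun x y => q (max x 0) (max y 0) with hQ'def
  set K' : ℝ → ℝ → ℝ → ℝ → ℝ :=
    fun x y s₁ s₂ => k (max x 0) (max y 0) (max s₁ 0) (max s₂ 0) with hK'def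
  set K₁' : ℝ → ℝ → ℝ → ℝ → ℝ :=
    fun x y s₁ s₂ => k₁ (max x 0) (max y 0) (max s₁ 0) (max s₂ 0) with hK₁'def
  set K₂' : ℝ → ℝ → ℝ → ℝ → ℝ :=
    fun x y s₁ s₂ => k₂ (max x 0) (max y 0) (max s₁ 0) (max s₂ 0) with hK₂'def
  set K₁₂' : ℝ → ℝ → ℝ → ℝ → ℝ :=
    fun x y s₁ s₂ => k₁₂ (max x 0) (max y 0) (max s₁ 0) (max s₂ 0) with hK₁₂'def
  -- equalities on the nonnegative region
  have hU'eq : ∀ x y : ℝ, 0 ≤ x → 0 ≤ y → U' x y = u x y := by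
    intro x y hx hy; simp only [hU'def]; rw [max_eq_left hx, max_eq_left hy]
  have hP'eq : ∀ x y : ℝ, 0 ≤ x → 0 ≤ y → P' x y = p x y := by
    intro x y hx hy; simp only [hP'def]; rw [max_eq_left hx, max_eq_left hy]
  have hQ'eq : ∀ x y : ℝ, 0 ≤ x → 0 ≤ y → Q' x y = q x y := by
    intro x y hx hy; simp only [hQ'def]; rw [max_eq_left hx, max_eq_left hy]
  have hK'eq : ∀ x y s₁ s₂ : ℝ, 0 ≤ x → 0 ≤ y → 0 ≤ s₁ → 0 ≤ s₂ →
      K' x y s₁ s₂ = k x y s₁ s₂ := by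
    intro x y s₁ s₂ hx hy h1 h2; simp only [hK'def]
    rw [max_eq_left hx, max_eq_left hy, max_eq_left h1, max_eq_left h2]
  have hK₁'eq : ∀ x y s₁ s₂ : ℝ, 0 ≤ x → 0 ≤ y → 0 ≤ s₁ → 0 ≤ s₂ →
      K₁' x y s₁ s₂ = k₁ x y s₁ s₂ := by
    intro x y s₁ s₂ hx hy h1 h2; simp only [hK₁'def]
    rw [max_eq_left hx, max_eq_left hy, max_eq_left h1, max_eq_left h2]
  have hK₂'eq : ∀ x y s₁ s₂ : ℝ, 0 ≤ x → 0 ≤ y → 0 ≤ s₁ → 0 ≤ s₂ →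
      K₂' x y s₁ s₂ = k₂ x y s₁ s₂ := by
    intro x y s₁ s₂ hx hy h1 h2; simp only [hK₂'def]
    rw [max_eq_left hx, max_eq_left hy, max_eq_left h1, max_eq_left h2]
  have hK₁₂'eq : ∀ x y s₁ s₂ : ℝ, 0 ≤ x → 0 ≤ y → 0 ≤ s₁ → 0 ≤ s₂ →
      K₁₂' x y s₁ s₂ = k₁₂ x y s₁ s₂ := by
    intro x y s₁ s₂ hx hy h1 h2; simp only [hK₁₂'def]
    rw [max_eq_left hx, max_eq_left hy, max_eq_left h1, max_eq_left h2]
  -- continuity of extensions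
  have hmap2 : ∀ z : ℝ × ℝ, ((max z.1 0, max z.2 0) : ℝ × ℝ) ∈ (Ici 0 ×ˢ Ici 0 : Set (ℝ × ℝ)) :=
    fun z => Set.mem_prod.2 ⟨le_max_right z.1 0, le_max_right z.2 0⟩
  have hmap4 : ∀ z : ℝ × ℝ × ℝ × ℝ,
      ((max z.1 0, max z.2.1 0, max z.2.2.1 0, max z.2.2.2 0) : ℝ × ℝ × ℝ × ℝ)
        ∈ (Ici 0 ×ˢ Ici 0 ×ˢ Ici 0 ×ˢ Ici 0 : Set (ℝ × ℝ × ℝ × ℝ)) :=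
    fun z => Set.mem_prod.2 ⟨le_max_right z.1 0, Set.mem_prod.2 ⟨le_max_right z.2.1 0,
      Set.mem_prod.2 ⟨le_max_right z.2.2.1 0, le_max_right z.2.2.2 0⟩⟩⟩
  have hU'c : Continuous fun z : ℝ × ℝ => U' z.1 z.2 := by
    have h := hu.comp_continuous
      (f := fun z : ℝ × ℝ => ((max z.1 0, max z.2 0) : ℝ × ℝ)) (by fun_prop) hmap2
    exact h
  have hP'c : Continuous fun z : ℝ × ℝ => P' z.1 z.2 := by
    have h := hp.comp_continuous
      (f := fun z : ℝ × ℝ => ((max z.1 0, max z.2 0) : ℝ × ℝ)) (by fun_prop) hmap2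
    exact h
  have hQ'c : Continuous fun z : ℝ × ℝ => Q' z.1 z.2 := by
    have h := hq.comp_continuous
      (f := fun z : ℝ × ℝ => ((max z.1 0, max z.2 0) : ℝ × ℝ)) (by fun_prop) hmap2
    exact h
  have hK'c : Continuous fun z : ℝ × ℝ × ℝ × ℝ => K' z.1 z.2.1 z.2.2.1 z.2.2.2 := by
    have h := hkc.comp_continuous (f := fun z : ℝ × ℝ × ℝ × ℝ =>
      ((max z.1 0, max z.2.1 0, max z.2.2.1 0, max z.2.2.2 0) : ℝ × ℝ × ℝ × ℝ))
      (by fun_prop) hmap4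
    exact h
  have hK₁'c : Continuous fun z : ℝ × ℝ × ℝ × ℝ => K₁' z.1 z.2.1 z.2.2.1 z.2.2.2 := by
    have h := hk₁c.comp_continuous (f := fun z : ℝ × ℝ × ℝ × ℝ =>
      ((max z.1 0, max z.2.1 0, max z.2.2.1 0, max z.2.2.2 0) : ℝ × ℝ × ℝ × ℝ))
      (by fun_prop) hmap4
    exact h
  have hK₂'c : Continuous fun z : ℝ × ℝ × ℝ × ℝ => K₂' z.1 z.2.1 z.2.2.1 z.2.2.2 := by
    have h := hk₂c.comp_continuous (f := fun z : ℝ × ℝ × ℝ × ℝ =>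
      ((max z.1 0, max z.2.1 0, max z.2.2.1 0, max z.2.2.2 0) : ℝ × ℝ × ℝ × ℝ))
      (by fun_prop) hmap4
    exact h
  have hK₁₂'c : Continuous fun z : ℝ × ℝ × ℝ × ℝ => K₁₂' z.1 z.2.1 z.2.2.1 z.2.2.2 := by
    have h := hk₁₂c.comp_continuous (f := fun z : ℝ × ℝ × ℝ × ℝ =>
      ((max z.1 0, max z.2.1 0, max z.2.2.1 0, max z.2.2.2 0) : ℝ × ℝ × ℝ × ℝ))
      (by fun_prop) hmap4
    exact h
  -- nonnegativity
  have hU'0 : ∀ x y, 0 ≤ U' x y := fun x y => hu0 _ _ (le_max_right _ _) (le_max_right _ _)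
  have hP'0 : ∀ x y, 0 ≤ P' x y := fun x y => hp0 _ _ (le_max_right _ _) (le_max_right _ _)
  have hQ'0 : ∀ x y, 0 ≤ Q' x y := fun x y => hq0 _ _ (le_max_right _ _) (le_max_right _ _)
  have hK'0 : ∀ x y s₁ s₂, 0 ≤ K' x y s₁ s₂ := fun x y s₁ s₂ =>
    hk0 _ _ _ _ (le_max_right _ _) (le_max_right _ _) (le_max_right _ _) (le_max_right _ _)
  have hK₁'0 : ∀ x y s₁ s₂, 0 ≤ K₁' x y s₁ s₂ := fun x y s₁ s₂ =>
    hk₁0 _ _ _ _ (le_max_right _ _) (le_max_right _ _) (le_max_right _ _) (le_max_right _ _)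
  have hK₂'0 : ∀ x y s₁ s₂, 0 ≤ K₂' x y s₁ s₂ := fun x y s₁ s₂ =>
    hk₂0 _ _ _ _ (le_max_right _ _) (le_max_right _ _) (le_max_right _ _) (le_max_right _ _)
  have hK₁₂'0 : ∀ x y s₁ s₂, 0 ≤ K₁₂' x y s₁ s₂ := fun x y s₁ s₂ =>
    hk₁₂0 _ _ _ _ (le_max_right _ _) (le_max_right _ _) (le_max_right _ _) (le_max_right _ _)
  -- FTC facts
  have hK₁'f : ∀ y s₁ s₂ : ℝ, 0 ≤ y → 0 ≤ s₁ → 0 ≤ s₂ → ∀ a' x : ℝ, 0 ≤ a' → 0 ≤ x →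
      (∫ r in a'..x, K₁' r y s₁ s₂) = K' x y s₁ s₂ - K' a' y s₁ s₂ := by
    intro y s₁ s₂ hy hs₁ hs₂ a' x ha' hx
    have hmin : (0:ℝ) ≤ min a' x := le_min ha' hx
    have hcong : (∫ r in a'..x, K₁' r y s₁ s₂) = ∫ r in a'..x, k₁ r y s₁ s₂ := by
      apply intervalIntegral.integral_congr
      intro r hr
      exact hK₁'eq r y s₁ s₂ (hmin.trans hr.1) hy hs₁ hs₂
    have hInt : IntervalIntegrable (fun r => k₁ r y s₁ s₂) volume a' x := by
      apply ContinuousOn.intervalIntegrable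
      have hco := ContinuousOn.comp (g := fun z : ℝ × ℝ × ℝ × ℝ => k₁ z.1 z.2.1 z.2.2.1 z.2.2.2)
        (f := fun r : ℝ => ((r, y, s₁, s₂) : ℝ × ℝ × ℝ × ℝ)) (s := uIcc a' x) hk₁c
        (Continuous.continuousOn (by fun_prop))
        (fun r hr => Set.mem_prod.2 ⟨hmin.trans hr.1, Set.mem_prod.2 ⟨hy,
          Set.mem_prod.2 ⟨hs₁, hs₂⟩⟩⟩)
      exact hco
    rw [hcong, intervalIntegral.integral_eq_sub_of_hasDerivAt
      (fun t ht => hk₁ t y s₁ s₂ (hmin.trans ht.1) hy hs₁ hs₂) hInt,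
      hK'eq x y s₁ s₂ hx hy hs₁ hs₂, hK'eq a' y s₁ s₂ ha' hy hs₁ hs₂]
  have hK₂'f : ∀ x s₁ s₂ : ℝ, 0 ≤ x → 0 ≤ s₁ → 0 ≤ s₂ → ∀ a' y : ℝ, 0 ≤ a' → 0 ≤ y →
      (∫ r in a'..y, K₂' x r s₁ s₂) = K' x y s₁ s₂ - K' x a' s₁ s₂ := by
    intro x s₁ s₂ hx hs₁ hs₂ a' y ha' hy
    have hmin : (0:ℝ) ≤ min a' y := le_min ha' hy
    have hcong : (∫ r in a'..y, K₂' x r s₁ s₂) = ∫ r in a'..y, k₂ x r s₁ s₂ := by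
      apply intervalIntegral.integral_congr
      intro r hr
      exact hK₂'eq x r s₁ s₂ hx (hmin.trans hr.1) hs₁ hs₂
    have hInt : IntervalIntegrable (fun r => k₂ x r s₁ s₂) volume a' y := by
      apply ContinuousOn.intervalIntegrable
      have hco := ContinuousOn.comp (g := fun z : ℝ × ℝ × ℝ × ℝ => k₂ z.1 z.2.1 z.2.2.1 z.2.2.2)
        (f := fun r : ℝ => ((x, r, s₁, s₂) : ℝ × ℝ × ℝ × ℝ)) (s := uIcc a' y) hk₂c
        (Continuous.continuousOn (by fun_prop))
        (fun r hr => Set.mem_prod.2 ⟨hx, Set.mem_prod.2 ⟨hmin.trans hr.1,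
          Set.mem_prod.2 ⟨hs₁, hs₂⟩⟩⟩)
      exact hco
    rw [hcong, intervalIntegral.integral_eq_sub_of_hasDerivAt
      (fun t ht => hk₂ x t s₁ s₂ hx (hmin.trans ht.1) hs₁ hs₂) hInt,
      hK'eq x y s₁ s₂ hx hy hs₁ hs₂, hK'eq x a' s₁ s₂ hx ha' hs₁ hs₂]
  have hK₁₂'f : ∀ x s₁ s₂ : ℝ, 0 ≤ x → 0 ≤ s₁ → 0 ≤ s₂ → ∀ a' y : ℝ, 0 ≤ a' → 0 ≤ y →
      (∫ r in a'..y, K₁₂' x r s₁ s₂) = K₁' x y s₁ s₂ - K₁' x a' s₁ s₂ := by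
    intro x s₁ s₂ hx hs₁ hs₂ a' y ha' hy
    have hmin : (0:ℝ) ≤ min a' y := le_min ha' hy
    have hcong : (∫ r in a'..y, K₁₂' x r s₁ s₂) = ∫ r in a'..y, k₁₂ x r s₁ s₂ := by
      apply intervalIntegral.integral_congr
      intro r hr
      exact hK₁₂'eq x r s₁ s₂ hx (hmin.trans hr.1) hs₁ hs₂
    have hInt : IntervalIntegrable (fun r => k₁₂ x r s₁ s₂) volume a' y := by
      apply ContinuousOn.intervalIntegrable
      have hco := ContinuousOn.comp (g := fun z : ℝ × ℝ × ℝ × ℝ => k₁₂ z.1 z.2.1 z.2.2.1 z.2.2.2)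
        (f := fun r : ℝ => ((x, r, s₁, s₂) : ℝ × ℝ × ℝ × ℝ)) (s := uIcc a' y) hk₁₂c
        (Continuous.continuousOn (by fun_prop))
        (fun r hr => Set.mem_prod.2 ⟨hx, Set.mem_prod.2 ⟨hmin.trans hr.1,
          Set.mem_prod.2 ⟨hs₁, hs₂⟩⟩⟩)
      exact hco
    rw [hcong, intervalIntegral.integral_eq_sub_of_hasDerivAt
      (fun t ht => hk₁₂ x t s₁ s₂ hx (hmin.trans ht.1) hs₁ hs₂) hInt,
      hK₁'eq x y s₁ s₂ hx hy hs₁ hs₂, hK₁'eq x a' s₁ s₂ hx ha' hs₁ hs₂]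
  -- conversion of the double integral
  have hVconv : ∀ x y : ℝ, 0 ≤ x → 0 ≤ y → pachV K' U' x y
      = ∫ s₁ in (0:ℝ)..x, ∫ s₂ in (0:ℝ)..y, k x y s₁ s₂ * u s₁ s₂ := by
    intro x y hx hy
    show (∫ s₁ in (0:ℝ)..x, ∫ s₂ in (0:ℝ)..y, K' x y s₁ s₂ * U' s₁ s₂) = _
    apply intervalIntegral.integral_congr
    intro s₁ hs₁
    rw [uIcc_of_le hx] at hs₁
    show (∫ s₂ in (0:ℝ)..y, K' x y s₁ s₂ * U' s₁ s₂) = _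
    apply intervalIntegral.integral_congr
    intro s₂ hs₂
    rw [uIcc_of_le hy] at hs₂
    show K' x y s₁ s₂ * U' s₁ s₂ = _
    rw [hK'eq x y s₁ s₂ hx hy hs₁.1 hs₂.1, hU'eq s₁ s₂ hs₁.1 hs₂.1]
  have hineq' : ∀ x y : ℝ, 0 ≤ x → 0 ≤ y →
      U' x y ≤ P' x y + Q' x y * pachV K' U' x y := by
    intro x y hx hy
    rw [hU'eq x y hx hy, hP'eq x y hx hy, hQ'eq x y hx hy, hVconv x y hx hy]
    exact hineq x y hx hy
  -- the core inequality
  have hcore := pach_core hK'c hK₁'c hK₂'c hK₁₂'c hU'c hP'c hQ'c hK'0 hK₁'0 hK₂'0 hK₁₂'0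
    hU'0 hP'0 hQ'0 hK₁'f hK₂'f hK₁₂'f hineq' hT1 hT2
  -- convert pachE to a and b
  have hEPeq : ∀ r w : ℝ, 0 ≤ r → 0 ≤ w → pachE K' K₁' K₂' K₁₂' P' r w = a r w := by
    intro r w hr hw
    rw [ha r w]
    show K' r w r w * P' r w + (∫ s in (0:ℝ)..w, K₂' r w r s * P' r s)
        + (∫ s in (0:ℝ)..r, K₁' r w s w * P' s w)
        + (∫ s₁ in (0:ℝ)..r, ∫ s₂ in (0:ℝ)..w, K₁₂' r w s₁ s₂ * P' s₁ s₂) = _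
    have e1 : K' r w r w * P' r w = k r w r w * p r w := by
      rw [hK'eq r w r w hr hw hr hw, hP'eq r w hr hw]
    have e2 : (∫ s in (0:ℝ)..w, K₂' r w r s * P' r s)
        = ∫ s₂ in (0:ℝ)..w, k₂ r w r s₂ * p r s₂ := by
      apply intervalIntegral.integral_congr
      intro s hs
      rw [uIcc_of_le hw] at hs
      show K₂' r w r s * P' r s = _
      rw [hK₂'eq r w r s hr hw hr hs.1, hP'eq r s hr hs.1]
    have e3 : (∫ s in (0:ℝ)..r, K₁' r w s w * P' s w)
        = ∫ s₁ in (0:ℝ)..r, k₁ r w s₁ w * p s₁ w := by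
      apply intervalIntegral.integral_congr
      intro s hs
      rw [uIcc_of_le hr] at hs
      show K₁' r w s w * P' s w = _
      rw [hK₁'eq r w s w hr hw hs.1 hw, hP'eq s w hs.1 hw]
    have e4 : (∫ s₁ in (0:ℝ)..r, ∫ s₂ in (0:ℝ)..w, K₁₂' r w s₁ s₂ * P' s₁ s₂)
        = ∫ s₁ in (0:ℝ)..r, ∫ s₂ in (0:ℝ)..w, k₁₂ r w s₁ s₂ * p s₁ s₂ := by
      apply intervalIntegral.integral_congr
      intro s₁ hs₁
      rw [uIcc_of_le hr] at hs₁
      show (∫ s₂ in (0:ℝ)..w, K₁₂' r w s₁ s₂ * P' s₁ s₂) = _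
      apply intervalIntegral.integral_congr
      intro s₂ hs₂
      rw [uIcc_of_le hw] at hs₂
      show K₁₂' r w s₁ s₂ * P' s₁ s₂ = _
      rw [hK₁₂'eq r w s₁ s₂ hr hw hs₁.1 hs₂.1, hP'eq s₁ s₂ hs₁.1 hs₂.1]
    rw [e1, e2, e3, e4]
  have hEQeq : ∀ r w : ℝ, 0 ≤ r → 0 ≤ w → pachE K' K₁' K₂' K₁₂' Q' r w = b r w := by
    intro r w hr hw
    rw [hb r w]
    show K' r w r w * Q' r w + (∫ s in (0:ℝ)..w, K₂' r w r s * Q' r s)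
        + (∫ s in (0:ℝ)..r, K₁' r w s w * Q' s w)
        + (∫ s₁ in (0:ℝ)..r, ∫ s₂ in (0:ℝ)..w, K₁₂' r w s₁ s₂ * Q' s₁ s₂) = _
    have e1 : K' r w r w * Q' r w = k r w r w * q r w := by
      rw [hK'eq r w r w hr hw hr hw, hQ'eq r w hr hw]
    have e2 : (∫ s in (0:ℝ)..w, K₂' r w r s * Q' r s)
        = ∫ s₂ in (0:ℝ)..w, k₂ r w r s₂ * q r s₂ := by
      apply intervalIntegral.integral_congr
      intro s hs
      rw [uIcc_of_le hw] at hs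
      show K₂' r w r s * Q' r s = _
      rw [hK₂'eq r w r s hr hw hr hs.1, hQ'eq r s hr hs.1]
    have e3 : (∫ s in (0:ℝ)..r, K₁' r w s w * Q' s w)
        = ∫ s₁ in (0:ℝ)..r, k₁ r w s₁ w * q s₁ w := by
      apply intervalIntegral.integral_congr
      intro s hs
      rw [uIcc_of_le hr] at hs
      show K₁' r w s w * Q' s w = _
      rw [hK₁'eq r w s w hr hw hs.1 hw, hQ'eq s w hs.1 hw]
    have e4 : (∫ s₁ in (0:ℝ)..r, ∫ s₂ in (0:ℝ)..w, K₁₂' r w s₁ s₂ * Q' s₁ s₂)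
        = ∫ s₁ in (0:ℝ)..r, ∫ s₂ in (0:ℝ)..w, k₁₂ r w s₁ s₂ * q s₁ s₂ := by
      apply intervalIntegral.integral_congr
      intro s₁ hs₁
      rw [uIcc_of_le hr] at hs₁
      show (∫ s₂ in (0:ℝ)..w, K₁₂' r w s₁ s₂ * Q' s₁ s₂) = _
      apply intervalIntegral.integral_congr
      intro s₂ hs₂
      rw [uIcc_of_le hw] at hs₂
      show K₁₂' r w s₁ s₂ * Q' s₁ s₂ = _
      rw [hK₁₂'eq r w s₁ s₂ hr hw hs₁.1 hs₂.1, hQ'eq s₁ s₂ hs₁.1 hs₂.1]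
    rw [e1, e2, e3, e4]
  have hDconv : (∫ r in (0:ℝ)..T1, ∫ w in (0:ℝ)..T2, pachE K' K₁' K₂' K₁₂' P' r w)
      = A T1 T2 := by
    rw [hA]
    apply intervalIntegral.integral_congr
    intro r hr
    rw [uIcc_of_le hT1] at hr
    show (∫ w in (0:ℝ)..T2, pachE K' K₁' K₂' K₁₂' P' r w) = _
    apply intervalIntegral.integral_congr
    intro w hw
    rw [uIcc_of_le hT2] at hw
    exact hEPeq r w hr.1 hw.1
  have hCconv : (∫ s in (0:ℝ)..T1, ∫ w in (0:ℝ)..T2, pachE K' K₁' K₂' K₁₂' Q' s w)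
      = ∫ s₁ in (0:ℝ)..T1, c s₁ T2 := by
    apply intervalIntegral.integral_congr
    intro s hs
    rw [uIcc_of_le hT1] at hs
    show (∫ w in (0:ℝ)..T2, pachE K' K₁' K₂' K₁₂' Q' s w) = c s T2
    rw [hc]
    apply intervalIntegral.integral_congr
    intro w hw
    rw [uIcc_of_le hT2] at hw
    exact hEQeq s w hs.1 hw.1
  rw [hDconv, hCconv] at hcore
  have hVc := hVconv T1 T2 hT1 hT2
  have h0 := hineq T1 T2 hT1 hT2
  have hqnn := hq0 T1 T2 hT1 hT2
  have hstep : q T1 T2 * (∫ s₁ in (0:ℝ)..T1, ∫ s₂ in (0:ℝ)..T2, k T1 T2 s₁ s₂ * u s₁ s₂)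
      ≤ q T1 T2 * (A T1 T2 * Real.exp (∫ s₁ in (0:ℝ)..T1, c s₁ T2)) := by
    apply mul_le_mul_of_nonneg_left _ hqnn
    rw [← hVc]
    exact hcore
  calc u T1 T2 ≤ p T1 T2 + q T1 T2 *
        ∫ s₁ in (0:ℝ)..T1, ∫ s₂ in (0:ℝ)..T2, k T1 T2 s₁ s₂ * u s₁ s₂ := h0
    _ ≤ p T1 T2 + q T1 T2 * (A T1 T2 * Real.exp (∫ s₁ in (0:ℝ)..T1, c s₁ T2)) := by
        linarith
    _ = p T1 T2 + q T1 T2 * A T1 T2 * Real.exp (∫ s₁ in (0:ℝ)..T1, c s₁ T2) := by ring
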